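/- Let ABC be a nondegenerate triangle in the Euclidean plane with circumcenter O, circumradius R, orthocenter H, and nine-point center N = midpoint(O,H). Then the triangle is acute (all three angles ∠BAC, ∠ABC, ∠BCA are strictly less than π/2) if and only if dist(O,N) < R/2. -/

import Mathlib

open EuclideanGeometry Real

instance : Fact (Module.finrank ℝ (EuclideanSpace ℝ (Fin 2)) = 2) := ⟨finrank_euclideanSpace_fin⟩
noncomputable instance : Module.Oriented ℝ (EuclideanSpace ℝ (Fin 2)) (Fin 2) :=
  ⟨(EuclideanSpace.basisFun (Fin 2) ℝ).toBasis.orientation⟩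

lemma trig_id' (x y : ℝ) :
    sin x ^ 2 + sin y ^ 2 + sin (π - x - y) ^ 2 - 2
      = 2 * (cos x * cos y * cos (π - x - y)) := by
  have hx := sin_sq_add_cos_sq x
  have hy := sin_sq_add_cos_sq y
  rw [show π - x - y = π - (x + y) by ring, Real.sin_pi_sub, Real.cos_pi_sub,
    Real.sin_add, Real.cos_add]
  nlinarith [hx, hy]

lemma prod_nonpos' (x y z : ℝ) (hy0 : 0 ≤ y) (hz0 : 0 ≤ z) (hsum : x + y + z = π)
    (hx : π / 2 ≤ x) : cos x * cos y * cos z ≤ 0 := by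
  have hcx : cos x ≤ 0 := Real.cos_nonpos_of_pi_div_two_le_of_le hx (by linarith [Real.pi_pos])
  have hcy : 0 ≤ cos y := Real.cos_nonneg_of_mem_Icc ⟨by linarith, by linarith⟩
  have hcz : 0 ≤ cos z := Real.cos_nonneg_of_mem_Icc ⟨by linarith, by linarith⟩
  exact mul_nonpos_of_nonpos_of_nonneg (mul_nonpos_of_nonpos_of_nonneg hcx hcy) hcz

lemma acute_iff_prod_pos' (x y z : ℝ) (hx0 : 0 ≤ x) (hy0 : 0 ≤ y) (hz0 : 0 ≤ z)
    (hsum : x + y + z = π) :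
    (x < π / 2 ∧ y < π / 2 ∧ z < π / 2) ↔ 0 < cos x * cos y * cos z := by
  constructor
  · rintro ⟨h1, h2, h3⟩
    have c1 : 0 < cos x := Real.cos_pos_of_mem_Ioo ⟨by linarith [Real.pi_pos], h1⟩
    have c2 : 0 < cos y := Real.cos_pos_of_mem_Ioo ⟨by linarith [Real.pi_pos], h2⟩
    have c3 : 0 < cos z := Real.cos_pos_of_mem_Ioo ⟨by linarith [Real.pi_pos], h3⟩
    positivity
  · intro hP
    refine ⟨?_, ?_, ?_⟩ <;> by_contra hc <;> push_neg at hc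
    · nlinarith [prod_nonpos' x y z hy0 hz0 hsum hc]
    · nlinarith [prod_nonpos' y x z hx0 hz0 (by linarith) hc]
    · nlinarith [prod_nonpos' z x y hx0 hy0 (by linarith) hc]

lemma sin_angle_eq' {p q r : EuclideanSpace ℝ (Fin 2)} (hp : p ≠ q) (hr : r ≠ q) :
    Real.sin (∠ p q r) = |Real.Angle.sin (∡ p q r)| := by
  rw [EuclideanGeometry.angle_eq_abs_oangle_toReal hp hr, ← Real.Angle.sin_toReal]
  set t := (∡ p q r).toReal with ht
  have h1 := Real.Angle.neg_pi_lt_toReal (∡ p q r)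
  have h2 := Real.Angle.toReal_le_pi (∡ p q r)
  rcases le_or_gt 0 t with hle | hlt
  · rw [abs_of_nonneg hle, abs_of_nonneg (Real.sin_nonneg_of_nonneg_of_le_pi hle h2)]
  · rw [abs_of_neg hlt, Real.sin_neg,
      abs_of_nonpos (Real.sin_nonpos_of_nonpos_of_neg_pi_le hlt.le (by linarith))]

/-- A nondegenerate triangle is acute if and only if the distance between its circumcenter
and its nine-point center is strictly less than half the circumradius. -/
theorem acute_iff_dist_circumcenter_ninePointCenter_lt
    (A B C : EuclideanSpace ℝ (Fin 2)) (h : AffineIndependent ℝ ![A, B, C]) :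
    let T : Affine.Triangle ℝ (EuclideanSpace ℝ (Fin 2)) := ⟨![A, B, C], h⟩
    let O := T.circumcenter
    let R := T.circumradius
    let H := T.orthocenter
    let N := midpoint ℝ O H
    (∠ B A C < π / 2 ∧ ∠ A B C < π / 2 ∧ ∠ B C A < π / 2) ↔ dist O N < R / 2 := by
  intro T O R H N
  have hInj := h.injective
  have hAB : A ≠ B := hInj.ne (by decide : (0 : Fin 3) ≠ 1)
  have hAC : A ≠ C := hInj.ne (by decide : (0 : Fin 3) ≠ 2)
  have hBC : B ≠ C := hInj.ne (by decide : (1 : Fin 3) ≠ 2)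
  have hnc : ¬Collinear ℝ ({A, B, C} : Set (EuclideanSpace ℝ (Fin 2))) :=
    affineIndependent_iff_not_collinear_set.mp h
  have hsum : ∠ B A C + ∠ A B C + ∠ B C A = π := by
    have hs := EuclideanGeometry.angle_add_angle_add_angle_eq_pi (p₁ := C) (p₂ := A) (p₃ := B)
      hAC
    rw [EuclideanGeometry.angle_comm C A B] at hs
    linarith
  -- law of sines
  have hpos : ∀ i : Fin 3, dist (T.points i) T.circumcenter = R :=
    fun i => T.dist_circumcenter_eq_circumradius i
  have hsa : dist B C = 2 * R * Real.sin (∠ B A C) := by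
    have h1 := T.dist_div_sin_oangle_eq_two_mul_circumradius
      (i₁ := 1) (i₂ := 0) (i₃ := 2) (by decide) (by decide) (by decide)
    have hpts : T.points 1 = B ∧ T.points 0 = A ∧ T.points 2 = C := ⟨rfl, rfl, rfl⟩
    rw [hpts.1, hpts.2.1, hpts.2.2] at h1
    rw [← sin_angle_eq' hAB.symm hAC.symm] at h1
    have hs : 0 < Real.sin (∠ B A C) :=
      sin_pos_of_not_collinear (by rwa [Set.insert_comm] at hnc)
    rw [div_eq_iff (ne_of_gt hs)] at h1
    linarith [h1]
  have hsb : dist A C = 2 * R * Real.sin (∠ A B C) := by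
    have h1 := T.dist_div_sin_oangle_eq_two_mul_circumradius
      (i₁ := 0) (i₂ := 1) (i₃ := 2) (by decide) (by decide) (by decide)
    have hpts : T.points 1 = B ∧ T.points 0 = A ∧ T.points 2 = C := ⟨rfl, rfl, rfl⟩
    rw [hpts.1, hpts.2.1, hpts.2.2] at h1
    rw [← sin_angle_eq' hAB hBC.symm] at h1
    have hs : 0 < Real.sin (∠ A B C) := sin_pos_of_not_collinear hnc
    rw [div_eq_iff (ne_of_gt hs)] at h1
    linarith [h1]
  have hsc : dist A B = 2 * R * Real.sin (∠ B C A) := by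
    have h1 := T.dist_div_sin_oangle_eq_two_mul_circumradius
      (i₁ := 1) (i₂ := 2) (i₃ := 0) (by decide) (by decide) (by decide)
    have hpts : T.points 1 = B ∧ T.points 0 = A ∧ T.points 2 = C := ⟨rfl, rfl, rfl⟩
    rw [hpts.1, hpts.2.1, hpts.2.2] at h1
    rw [← sin_angle_eq' hBC hAC] at h1
    have hs : 0 < Real.sin (∠ B C A) := by
      refine sin_pos_of_not_collinear ?_
      intro hcol
      exact hnc (by
        have : ({B, C, A} : Set (EuclideanSpace ℝ (Fin 2))) = {A, B, C} := by
          ext x; simp [or_comm, or_assoc, or_left_comm]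
        rwa [this] at hcol)
    rw [div_eq_iff (ne_of_gt hs)] at h1
    rw [dist_comm B A] at h1
    linarith [h1]
  -- norms of vertex vectors
  have hA' : ‖A -ᵥ O‖ = R := by
    rw [← dist_eq_norm_vsub]; exact hpos 0
  have hB' : ‖B -ᵥ O‖ = R := by
    rw [← dist_eq_norm_vsub]; exact hpos 1
  have hC' : ‖C -ᵥ O‖ = R := by
    rw [← dist_eq_norm_vsub]; exact hpos 2
  -- orthocenter vector
  have hGO : (Finset.univ : Finset (Fin 3)).centroid ℝ T.points -ᵥ O
      = (3⁻¹ : ℝ) • ((A -ᵥ O) + (B -ᵥ O) + (C -ᵥ O)) := by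
    rw [Finset.centroid_def,
      ← Finset.sum_smul_vsub_const_eq_affineCombination_vsub _ _ _ _
        (Finset.sum_centroidWeights_eq_one_of_nonempty ℝ _ ⟨0, Finset.mem_univ 0⟩)]
    simp only [Finset.centroidWeights_apply, Finset.card_univ, Fintype.card_fin,
      Fin.sum_univ_three, Matrix.cons_val_zero, Matrix.cons_val_one, Matrix.head_cons,
      Matrix.cons_val_two, Matrix.tail_cons]
    push_cast
    change (3⁻¹ : ℝ) • (A -ᵥ O) + (3⁻¹ : ℝ) • (B -ᵥ O) + (3⁻¹ : ℝ) • (C -ᵥ O) = _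
    module
  have hH : H -ᵥ O = (A -ᵥ O) + (B -ᵥ O) + (C -ᵥ O) := by
    show T.orthocenter -ᵥ O = _
    rw [T.orthocenter_eq_smul_vsub_vadd_circumcenter, vadd_vsub, hGO, smul_smul]
    norm_num
  have hOH2 : dist O H ^ 2 = 3 * R ^ 2
      + 2 * (inner ℝ (A -ᵥ O) (B -ᵥ O) + inner ℝ (A -ᵥ O) (C -ᵥ O)
        + (inner ℝ (B -ᵥ O) (C -ᵥ O) : ℝ)) := by
    rw [dist_comm, dist_eq_norm_vsub (EuclideanSpace ℝ (Fin 2)), hH,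
      norm_add_sq_real, norm_add_sq_real, inner_add_left, hA', hB', hC']
    ring
  have hside : ∀ P Q : EuclideanSpace ℝ (Fin 2), ‖P -ᵥ O‖ = R → ‖Q -ᵥ O‖ = R →
      dist P Q ^ 2 = 2 * R ^ 2 - 2 * (inner ℝ (P -ᵥ O) (Q -ᵥ O) : ℝ) := by
    intro P Q hP hQ
    rw [dist_eq_norm_vsub (EuclideanSpace ℝ (Fin 2)),
      show P -ᵥ Q = (P -ᵥ O) - (Q -ᵥ O) from (vsub_sub_vsub_cancel_right P Q O).symm,
      norm_sub_sq_real, hP, hQ]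
    ring
  have hOH9 : dist O H ^ 2 = 9 * R ^ 2 - (dist B C ^ 2 + dist A C ^ 2 + dist A B ^ 2) := by
    have h1 := hside B C hB' hC'
    have h2 := hside A C hA' hC'
    have h3 := hside A B hA' hB'
    rw [hOH2, h1, h2, h3]; ring
  have hprod : dist O H ^ 2 = R ^ 2 - 8 * R ^ 2 * (cos (∠ B A C) * cos (∠ A B C) * cos (∠ B C A)) := by
    have htrig := trig_id' (∠ B A C) (∠ A B C)
    rw [show π - (∠ B A C) - (∠ A B C) = (∠ B C A) by linarith] at htrig
    rw [hOH9, hsa, hsb, hsc]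
    linear_combination (-4 * R ^ 2) * htrig
  have hR : 0 < R := T.circumradius_pos
  have hON : dist O N = dist O H / 2 := by
    show dist O (midpoint ℝ O H) = _
    rw [dist_left_midpoint]
    rw [show ‖(2 : ℝ)‖ = 2 by norm_num]
    ring
  have h1 : dist O N < R / 2 ↔ dist O H < R := by
    rw [hON]; constructor <;> intro hh <;> linarith
  clear_value T O R H N
  have hd0 : (0 : ℝ) ≤ dist O H := dist_nonneg
  have hR2 : (0 : ℝ) < R ^ 2 := by positivity
  have h2 : dist O H < R ↔ dist O H ^ 2 < R ^ 2 := by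
    constructor <;> intro hh
    · nlinarith [hd0, hR]
    · nlinarith [hd0, hR]
  have h3 : dist O H ^ 2 < R ^ 2 ↔ 0 < cos (∠ B A C) * cos (∠ A B C) * cos (∠ B C A) := by
    rw [hprod]; constructor <;> intro hh <;> nlinarith [hR2]
  rw [h1, h2, h3]
  exact acute_iff_prod_pos' (∠ B A C) (∠ A B C) (∠ B C A) (angle_nonneg _ _ _) (angle_nonneg _ _ _)
    (angle_nonneg _ _ _) hsum
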